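/- arXiv:2203.01704 — 4 statements merged into one kernel-verified Lean document; each statement's English description precedes it below -/
import Mathlib

section
/- Let M be a nonnegative integer and let ξ > 0. Then 1/Γ(ξ) = ((M+1)^{-1/2} / (2π)^{M/2}) · ((M+1)^{(M+1)ξ} / Γ((M+1)ξ)) · ∏_{j=2}^{M+1} ∫_0^∞ t^{ξ + (j-1)/(M+1) - 1} e^{-t} dt. -/
open Real MeasureTheory Finset

open Set in
private lemma convexOn_finset_sum {ι : Type*} (s : Finset ι) (f : ι → ℝ → ℝ)
    (h : ∀ i ∈ s, ConvexOn ℝ (Ioi (0:ℝ)) (f i)) :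
    ConvexOn ℝ (Ioi (0:ℝ)) (fun x => ∑ i ∈ s, f i x) := by
  classical
  induction s using Finset.induction_on with
  | empty => simpa using convexOn_const (0:ℝ) (convex_Ioi 0)
  | insert a t hni ih =>
    simp only [Finset.sum_insert hni]
    exact (h a (Finset.mem_insert_self a t)).add
      (ih fun i hi => h i (Finset.mem_insert_of_mem hi))

private lemma prod_range_mul' (f : ℕ → ℝ) (p q : ℕ) :
    ∏ k ∈ Finset.range (p * q), f k = ∏ b ∈ Finset.range p, ∏ a ∈ Finset.range q, f (b * q + a) := by
  induction p with
  | zero => simp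
  | succ n ih =>
    rw [Nat.succ_mul, Finset.prod_range_add, ih, Finset.prod_range_succ]

private lemma rpow_finset_sum {x : ℝ} (hx : 0 < x) {ι : Type*} (s : Finset ι) (f : ι → ℝ) :
    x ^ (∑ i ∈ s, f i) = ∏ i ∈ s, x ^ (f i) := by
  classical
  induction s using Finset.induction_on with
  | empty => simp
  | insert a t hni ih => rw [Finset.sum_insert hni, Finset.prod_insert hni,
      Real.rpow_add hx, ih]

/-- Auxiliary function for the Gauss multiplication formula. -/
noncomputable def mG (p : ℕ) (s : ℝ) : ℝ :=
  (p:ℝ) ^ s * ∏ k ∈ Finset.range p, Real.Gamma ((s + k) / p)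

/-- The constant in the Gauss multiplication formula. -/
noncomputable def CC (p : ℕ) : ℝ := mG p 1

lemma mG_pos {p : ℕ} (hp : 0 < p) {s : ℝ} (hs : 0 < s) : 0 < mG p s := by
  have hp' : (0:ℝ) < p := by exact_mod_cast hp
  refine mul_pos (rpow_pos_of_pos hp' _) (Finset.prod_pos fun k _ => ?_)
  exact Real.Gamma_pos_of_pos (div_pos (by positivity) hp')

lemma CC_pos {p : ℕ} (hp : 0 < p) : 0 < CC p := mG_pos hp one_pos

lemma mG_add_one {p : ℕ} (hp : 0 < p) {s : ℝ} (hs : 0 < s) :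
    mG p (s + 1) = s * mG p s := by
  have hp' : (0:ℝ) < p := by exact_mod_cast hp
  have hsp : s / p ≠ 0 := (div_pos hs hp').ne'
  have h0 : Real.Gamma (s/p) ≠ 0 := (Real.Gamma_pos_of_pos (div_pos hs hp')).ne'
  have hre : ∀ k : ℕ, (s + 1 + (k:ℝ))/p = (s + ((k:ℝ) + 1))/p := fun k => by ring
  have hprod : ∏ k ∈ Finset.range p, Real.Gamma ((s + 1 + k)/p)
      = (s/p) * ∏ k ∈ Finset.range p, Real.Gamma ((s + k)/p) := by
    have e1 := Finset.prod_range_succ' (fun k : ℕ => Real.Gamma ((s + k)/p)) p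
    have e2 := Finset.prod_range_succ (fun k : ℕ => Real.Gamma ((s + k)/p)) p
    have e3 : Real.Gamma ((s + (p:ℝ))/p) = (s/p) * Real.Gamma (s/p) := by
      have h4 : (s + (p:ℝ))/p = s/p + 1 := by field_simp
      rw [h4, Real.Gamma_add_one hsp]
    simp only [Nat.cast_zero, add_zero] at e1 e2
    rw [e2, e3] at e1
    have e4 : ∏ k ∈ Finset.range p, Real.Gamma ((s + ((k:ℝ) + 1))/p)
        = (s/p) * ∏ k ∈ Finset.range p, Real.Gamma ((s + k)/p) := by
      apply mul_right_cancel₀ h0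
      push_cast at e1
      rw [← e1]
      ring
    simp_rw [hre]
    exact e4
  unfold mG
  rw [hprod, Real.rpow_add hp', Real.rpow_one]
  field_simp

lemma mG_div_eq_Gamma {p : ℕ} (hp : 0 < p) {s : ℝ} (hs : 0 < s) :
    mG p s / CC p = Real.Gamma s := by
  have hp' : (0:ℝ) < p := by exact_mod_cast hp
  have hCC : CC p ≠ 0 := (CC_pos hp).ne'
  have heq : Set.EqOn (Real.log ∘ fun s => mG p s / CC p)
      (fun s => (∑ k ∈ Finset.range p, Real.log (Real.Gamma ((s + k)/p)))
        + s * Real.log p + (-(Real.log (CC p)))) (Set.Ioi 0) := by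
    intro x hx
    have hx' : (0:ℝ) < x := hx
    have hne : ∀ k ∈ Finset.range p, Real.Gamma ((x + k)/p) ≠ 0 := fun k _ =>
      (Real.Gamma_pos_of_pos (div_pos (by positivity) hp')).ne'
    have hprodne : (∏ k ∈ Finset.range p, Real.Gamma ((x + k)/p)) ≠ 0 :=
      Finset.prod_ne_zero_iff.mpr hne
    simp only [Function.comp_apply, mG]
    rw [Real.log_div (mul_ne_zero (Real.rpow_pos_of_pos hp' x).ne' hprodne) hCC,
      Real.log_mul (Real.rpow_pos_of_pos hp' x).ne' hprodne,
      Real.log_rpow hp', Real.log_prod hne]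
    ring
  have hconv : ConvexOn ℝ (Set.Ioi (0:ℝ)) (Real.log ∘ fun s => mG p s / CC p) := by
    refine ConvexOn.congr ?_ heq.symm
    refine ConvexOn.add_const (ConvexOn.add ?_ ?_) _
    · refine convexOn_finset_sum _ _ (fun k _ => ?_)
      set A : ℝ →ᵃ[ℝ] ℝ := (DistribMulAction.toLinearMap ℝ ℝ ((p:ℝ)⁻¹)).toAffineMap +
        AffineMap.const ℝ ℝ ((k:ℝ)/p) with hA
      have hAx : ∀ x : ℝ, A x = (x + k)/p := by
        intro x
        simp [hA, DistribMulAction.toLinearMap, DistribSMul.toLinearMap_apply, smul_eq_mul]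
        field_simp
      have h1 : ConvexOn ℝ (A ⁻¹' Set.Ioi 0) (Real.log ∘ Real.Gamma ∘ A) :=
        Real.convexOn_log_Gamma.comp_affineMap A
      have h2 : Set.Ioi (0:ℝ) ⊆ A ⁻¹' Set.Ioi 0 := by
        intro x hx
        simp only [Set.mem_preimage, hAx, Set.mem_Ioi]
        have : (0:ℝ) < x := hx
        positivity
      have h3 := (h1.subset h2 (convex_Ioi 0))
      refine h3.congr (fun x _ => ?_)
      simp [hAx]
    · convert (convexOn_id (convex_Ioi (0:ℝ))).smul
        (Real.log_nonneg (show (1:ℝ) ≤ p by exact_mod_cast hp)) using 1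
      · rfl
      · rfl
      · funext s; simp [mul_comm]
  have := Real.eq_Gamma_of_log_convex hconv
    (fun {y} hy => by rw [mG_add_one hp hy, mul_div_assoc])
    (fun {y} hy => div_pos (mG_pos hp hy) (CC_pos hp))
    (by rw [CC]; exact div_self hCC) hs
  exact this

/-- Gauss multiplication formula, with constant `CC p`. -/
lemma key {p : ℕ} (hp : 0 < p) {z : ℝ} (hz : 0 < z) :
    ∏ k ∈ Finset.range p, Real.Gamma (z + k / p)
      = CC p * (p:ℝ) ^ (-((p:ℝ) * z)) * Real.Gamma ((p:ℝ) * z) := by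
  have hp' : (0:ℝ) < p := by exact_mod_cast hp
  have hpz : (0:ℝ) < (p:ℝ) * z := mul_pos hp' hz
  have h := mG_div_eq_Gamma hp hpz
  unfold mG at h
  have hre : ∀ k : ℕ, ((p:ℝ) * z + k)/p = z + k/p := fun k => by field_simp
  simp only [hre] at h
  have hne : ((p:ℝ)) ^ ((p:ℝ)*z) ≠ 0 := (Real.rpow_pos_of_pos hp' _).ne'
  rw [Real.rpow_neg hp'.le]
  rw [div_eq_iff (CC_pos hp).ne'] at h
  have goal' : CC p * ((p:ℝ) ^ ((p:ℝ)*z))⁻¹ * Real.Gamma ((p:ℝ)*z)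
      = (Real.Gamma ((p:ℝ)*z) * CC p) / (p:ℝ) ^ ((p:ℝ)*z) := by ring
  rw [goal', ← h]
  exact (mul_div_cancel_left₀ _ hne).symm

lemma CC_comp (p q : ℕ) (hp : 0 < p) (hq : 0 < q) :
    CC (p * q) = CC p ^ q * CC q * (p:ℝ) ^ (-(((q:ℝ) - 1) / 2)) := by
  have hp' : (0:ℝ) < p := by exact_mod_cast hp
  have hq' : (0:ℝ) < q := by exact_mod_cast hq
  set w : ℕ → ℝ := fun a => 1 + (a:ℝ)/((p:ℝ)*(q:ℝ)) with hw
  have hwpos : ∀ a : ℕ, 0 < w a := fun a => by positivity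
  have hpw : ∀ a : ℕ, (p:ℝ) * w a = (p:ℝ) + (a:ℝ)/(q:ℝ) := by
    intro a; rw [hw]; field_simp
  have step1 : ∏ k ∈ Finset.range (p*q), Real.Gamma (1 + (k:ℝ)/((p:ℝ)*(q:ℝ)))
      = ∏ a ∈ Finset.range q, ∏ b ∈ Finset.range p, Real.Gamma (w a + (b:ℝ)/(p:ℝ)) := by
    rw [prod_range_mul', Finset.prod_comm]
    refine Finset.prod_congr rfl (fun a _ => Finset.prod_congr rfl (fun b _ => ?_))
    congr 1
    rw [hw]
    push_cast
    field_simp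
    ring
  have step2 : ∏ a ∈ Finset.range q, ∏ b ∈ Finset.range p, Real.Gamma (w a + (b:ℝ)/(p:ℝ))
      = CC p ^ q * ((p:ℝ) ^ (∑ a ∈ Finset.range q, -((p:ℝ) * w a)))
          * ∏ a ∈ Finset.range q, Real.Gamma ((p:ℝ) * w a) := by
    rw [rpow_finset_sum hp',
      show CC p ^ q = ∏ _a ∈ Finset.range q, CC p by rw [Finset.prod_const, Finset.card_range],
      ← Finset.prod_mul_distrib, ← Finset.prod_mul_distrib]
    exact Finset.prod_congr rfl (fun a _ => key hp (hwpos a))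
  have hsum : (∑ a ∈ Finset.range q, -((p:ℝ) * w a))
      = -((p:ℝ)*(q:ℝ)) + -(((q:ℝ) - 1)/2) := by
    have h1 := congrArg (Nat.cast : ℕ → ℝ) (Finset.sum_range_id_mul_two q)
    push_cast [Nat.cast_sub (Nat.one_le_iff_ne_zero.mpr hq.ne')] at h1
    have h3 : ∀ a : ℕ, -((p:ℝ) * w a) = -(p:ℝ) + -(a:ℝ) * ((q:ℝ))⁻¹ := fun a => by
      rw [hpw, div_eq_mul_inv]; ring
    simp only [h3]
    rw [Finset.sum_add_distrib, Finset.sum_const, Finset.card_range, ← Finset.sum_mul,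
      Finset.sum_neg_distrib, nsmul_eq_mul]
    field_simp
    linarith [h1]
  have step3 : ∏ a ∈ Finset.range q, Real.Gamma ((p:ℝ) * w a)
      = CC q * (q:ℝ) ^ (-((q:ℝ)*(p:ℝ))) * Real.Gamma ((q:ℝ)*(p:ℝ)) := by
    rw [← key hq hp']
    exact Finset.prod_congr rfl (fun a _ => by rw [hpw])
  have hL := key (Nat.mul_pos hp hq) (z := (1:ℝ)) one_pos
  have hcast : ∀ k : ℕ, (1:ℝ) + (k:ℝ)/((p:ℝ)*(q:ℝ)) = 1 + (k:ℝ)/((p*q : ℕ):ℝ) := by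
    intro k; push_cast; ring
  simp only [← hcast, mul_one] at hL
  rw [step1, step2, hsum, step3] at hL
  push_cast at hL
  rw [Real.mul_rpow hp'.le hq'.le, Real.rpow_add hp'] at hL
  have hq2 : (q:ℝ) ^ (-((q:ℝ)*(p:ℝ))) = (q:ℝ) ^ (-((p:ℝ)*(q:ℝ))) := by rw [mul_comm]
  have hg2 : Real.Gamma ((q:ℝ)*(p:ℝ)) = Real.Gamma ((p:ℝ)*(q:ℝ)) := by rw [mul_comm]
  rw [hq2, hg2] at hL
  have hA : (p:ℝ) ^ (-((p:ℝ)*(q:ℝ))) ≠ 0 := (Real.rpow_pos_of_pos hp' _).ne'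
  have hB : (q:ℝ) ^ (-((p:ℝ)*(q:ℝ))) ≠ 0 := (Real.rpow_pos_of_pos hq' _).ne'
  have hG : Real.Gamma ((p:ℝ)*(q:ℝ)) ≠ 0 := (Real.Gamma_pos_of_pos (by positivity)).ne'
  apply mul_right_cancel₀ (mul_ne_zero (mul_ne_zero hA hB) hG)
  linear_combination -hL

lemma CC_two : CC 2 = 2 * Real.sqrt π := by
  rw [CC, mG, Finset.prod_range_succ, Finset.prod_range_succ, Finset.prod_range_zero]
  norm_num [Real.Gamma_one, Real.Gamma_one_half_eq]

lemma CC_eq {p : ℕ} (hp : 0 < p) :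
    CC p = (2 * π) ^ (((p:ℝ) - 1) / 2) * (p:ℝ) ^ ((1:ℝ) / 2) := by
  have hp' : (0:ℝ) < p := by exact_mod_cast hp
  set x : ℝ := ((p:ℝ) - 1) / 2 with hx
  have h1 := CC_comp 2 p two_pos hp
  have h2 := CC_comp p 2 hp two_pos
  rw [Nat.mul_comm] at h2
  have h3 := h1.symm.trans h2
  push_cast at h3
  norm_num at h3
  rw [← hx] at h3
  -- h3 : CC 2 ^ p * CC p * 2 ^ (-x) = CC p ^ 2 * CC 2 * p ^ (-(1/2))
  have hC2 := CC_pos (show 0 < 2 by norm_num)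
  have hCp := CC_pos hp
  have hppos : (0:ℝ) < (p:ℝ) ^ (-((1:ℝ)/2)) := Real.rpow_pos_of_pos hp' _
  have hS : CC 2 ^ p * (2:ℝ) ^ (-x)
      = ((2*π) ^ x * (p:ℝ) ^ ((1:ℝ)/2)) * CC 2 * (p:ℝ) ^ (-((1:ℝ)/2)) := by
    have hc : (0:ℝ) < 2 * Real.sqrt π := by positivity
    have e0 : CC 2 ^ p = (2 * Real.sqrt π) ^ ((p:ℝ)) := by
      rw [CC_two, Real.rpow_natCast]
    have e1 : (2 * Real.sqrt π) ^ ((p:ℝ)) = (4*π) ^ x * (2 * Real.sqrt π) := by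
      have hp2x : (p:ℝ) = 2 * x + 1 := by rw [hx]; ring
      rw [hp2x, Real.rpow_add hc, Real.rpow_one, Real.rpow_mul hc.le,
        show (2 * Real.sqrt π) ^ (2:ℝ) = 4 * π by
          rw [Real.rpow_two]; rw [mul_pow]; rw [Real.sq_sqrt Real.pi_pos.le]; ring]
    have e2 : (4*π:ℝ) ^ x * (2:ℝ) ^ (-x) = (2*π) ^ x := by
      rw [Real.rpow_neg (by norm_num : (0:ℝ) ≤ 2),
        show (2*π:ℝ) = (4*π)/2 by ring,
        Real.div_rpow (by positivity) (by norm_num : (0:ℝ) ≤ 2), div_eq_mul_inv]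
    have e3 : (p:ℝ) ^ ((1:ℝ)/2) * (p:ℝ) ^ (-((1:ℝ)/2)) = 1 := by
      rw [← Real.rpow_add hp']; norm_num
    rw [e0, e1, CC_two]
    calc (4*π:ℝ) ^ x * (2 * Real.sqrt π) * (2:ℝ) ^ (-x)
        = ((4*π:ℝ) ^ x * (2:ℝ) ^ (-x)) * (2 * Real.sqrt π) := by ring
      _ = (2*π) ^ x * (2 * Real.sqrt π) := by rw [e2]
      _ = ((2*π) ^ x * ((p:ℝ) ^ ((1:ℝ)/2) * (p:ℝ) ^ (-((1:ℝ)/2)))) * (2 * Real.sqrt π) := by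
          rw [e3]; ring
      _ = ((2*π) ^ x * (p:ℝ) ^ ((1:ℝ)/2)) * (2 * Real.sqrt π) * (p:ℝ) ^ (-((1:ℝ)/2)) := by ring
  have h6 : (((2*π) ^ x * (p:ℝ) ^ ((1:ℝ)/2)) * CC p) * (CC 2 * (p:ℝ) ^ (-((1:ℝ)/2)))
      = (CC p * CC p) * (CC 2 * (p:ℝ) ^ (-((1:ℝ)/2))) := by
    linear_combination h3 - CC p * hS
  have h7 := mul_right_cancel₀ (mul_ne_zero hC2.ne' hppos.ne') h6
  have h8 := mul_right_cancel₀ hCp.ne' h7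
  exact h8.symm

theorem stmt_4 (M : ℕ) (ξ : ℝ) (hξ : 0 < ξ) :
    1 / Real.Gamma ξ =
      (((M : ℝ) + 1) ^ (-(1 : ℝ) / 2) / (2 * π) ^ ((M : ℝ) / 2)) *
        (((M : ℝ) + 1) ^ (((M : ℝ) + 1) * ξ) / Real.Gamma (((M : ℝ) + 1) * ξ)) *
        ∏ j ∈ Finset.Icc 2 (M + 1),
          ∫ t in Set.Ioi (0 : ℝ),
            t ^ (ξ + ((j : ℝ) - 1) / ((M : ℝ) + 1) - 1) * Real.exp (-t) := by
  have hp : 0 < M + 1 := Nat.succ_pos M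
  have hp' : (0:ℝ) < (M:ℝ) + 1 := by positivity
  have hΓξ : 0 < Real.Gamma ξ := Real.Gamma_pos_of_pos hξ
  have hΓpξ : 0 < Real.Gamma (((M:ℝ)+1)*ξ) := Real.Gamma_pos_of_pos (by positivity)
  have hint : ∀ j ∈ Finset.Icc 2 (M+1),
      (∫ t in Set.Ioi (0:ℝ), t ^ (ξ + ((j:ℝ) - 1)/((M:ℝ)+1) - 1) * Real.exp (-t))
        = Real.Gamma (ξ + ((j:ℝ) - 1)/((M:ℝ)+1)) := by
    intro j hj
    obtain ⟨hj1, hj2⟩ := Finset.mem_Icc.mp hj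
    have hjr : (1:ℝ) ≤ (j:ℝ) := by exact_mod_cast le_trans (by norm_num) hj1
    have hd : (0:ℝ) ≤ (j:ℝ) - 1 := by linarith
    have hpos : 0 < ξ + ((j:ℝ) - 1)/((M:ℝ)+1) := by positivity
    rw [Real.Gamma_eq_integral hpos]
    simp_rw [mul_comm]
  rw [Finset.prod_congr rfl hint]
  have hre : ∏ j ∈ Finset.Icc 2 (M+1), Real.Gamma (ξ + ((j:ℝ) - 1)/((M:ℝ)+1))
      = ∏ i ∈ Finset.range M, Real.Gamma (ξ + ((i:ℝ)+1)/((M:ℝ)+1)) := by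
    rw [← Finset.Ico_add_one_right_eq_Icc, Finset.prod_Ico_eq_prod_range]
    have hMM : M + 1 + 1 - 2 = M := by omega
    rw [hMM]
    refine Finset.prod_congr rfl (fun i _ => ?_)
    congr 1
    push_cast
    ring
  rw [hre]
  have hkey := key hp hξ
  rw [Finset.prod_range_succ'] at hkey
  push_cast at hkey
  simp only [zero_div, add_zero] at hkey
  have hCC := CC_eq hp
  push_cast at hCC
  have hMc : (((M:ℝ) + 1) - 1)/2 = (M:ℝ)/2 := by ring
  rw [hMc] at hCC
  rw [hCC] at hkey
  -- hkey : (∏ i ∈ range M, Γ (ξ + (↑i+1)/(↑M+1))) * Γ ξ = (2π)^(M/2) * (M+1)^(1/2) * (M+1)^(-((M+1)ξ)) * Γ ((M+1)ξ)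
  have hPeq : (∏ i ∈ Finset.range M, Real.Gamma (ξ + ((i:ℝ)+1)/((M:ℝ)+1)))
      = (2*π)^((M:ℝ)/2) * ((M:ℝ)+1)^((1:ℝ)/2) * ((M:ℝ)+1)^(-(((M:ℝ)+1)*ξ))
          * Real.Gamma (((M:ℝ)+1)*ξ) / Real.Gamma ξ := by
    rw [eq_div_iff hΓξ.ne']
    linear_combination hkey
  rw [hPeq, one_div]
  have e5 : ((M:ℝ)+1) ^ (-(1:ℝ)/2) * ((M:ℝ)+1)^((1:ℝ)/2) = 1 := by
    rw [← Real.rpow_add hp']; norm_num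
  have e6 : ((M:ℝ)+1) ^ (((M:ℝ)+1)*ξ) * ((M:ℝ)+1)^(-(((M:ℝ)+1)*ξ)) = 1 := by
    rw [← Real.rpow_add hp']; norm_num
  have h2π : ((2*π:ℝ))^((M:ℝ)/2) ≠ 0 := (Real.rpow_pos_of_pos (by positivity) _).ne'
  trans ((((M:ℝ)+1) ^ (-(1:ℝ)/2) * ((M:ℝ)+1)^((1:ℝ)/2))
    * (((M:ℝ)+1) ^ (((M:ℝ)+1)*ξ) * ((M:ℝ)+1)^(-(((M:ℝ)+1)*ξ)))
    * ((2*π)^((M:ℝ)/2) * ((2*π)^((M:ℝ)/2))⁻¹)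
    * (Real.Gamma (((M:ℝ)+1)*ξ) * (Real.Gamma (((M:ℝ)+1)*ξ))⁻¹)
    * (Real.Gamma ξ)⁻¹)
  · rw [e5, e6, mul_inv_cancel₀ h2π, mul_inv_cancel₀ hΓpξ.ne']
    ring
  · ring
end

section
/- Let m be a positive integer, K a nonnegative integer, and ξ > 0. Then 1/(Γ(ξ))^m = C_{m,K} · (1/ξ^{mξ}) · ξ^{m + K/2 + 1/2 - 1} · e^{2^K m ξ} · 2^{(2(2^K - 1) - K) m ξ} · (∏_{j=2}^{m} ∫_0^1 ρ^{ξ + (j-1)/m - 1} (1-ρ)^{(m-j+1)/m - 1} dρ) · (∏_{k=1}^{K} ∫_0^∞ t^{2^{k-1} m ξ + 1/2 - 1} e^{-t·2^K m ξ} dt) · ((2^K m ξ)^{2^K m ξ - 1/2} / (Γ(2^K m ξ) e^{2^K m ξ})), where C_{m,K} = (2^K m / (2π))^{K/2} / ((2π)^{(m-1)/2} ∏_{j=2}^{m} Γ((m-j+1)/m)). -/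
open Real MeasureTheory Finset Set

lemma aux_abs_one_sub_exp (θ : ℝ) :
    ‖1 - Complex.exp (θ * Complex.I)‖ = 2 * |Real.sin (θ / 2)| := by
  have h : (1 : ℂ) - Complex.exp (θ * Complex.I) =
      Complex.exp ((θ/2 : ℝ) * Complex.I) *
        (Complex.exp (-((θ/2 : ℝ)) * Complex.I) - Complex.exp ((θ/2 : ℝ) * Complex.I)) := by
    rw [mul_sub, ← Complex.exp_add, ← Complex.exp_add]
    norm_num
    rw [show ((θ:ℂ)/2 * Complex.I + θ/2 * Complex.I) = θ * Complex.I by ring]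
  have h2 : Complex.exp (-((θ/2 : ℝ)) * Complex.I) - Complex.exp ((θ/2 : ℝ) * Complex.I) =
      -(2 * Complex.sin ((θ/2 : ℝ)) * Complex.I) := by
    rw [Complex.sin]
    field_simp
    ring_nf
    simp [Complex.I_sq]
    ring
  rw [h, h2, norm_mul, Complex.norm_exp_ofReal_mul_I, one_mul, norm_neg, norm_mul, norm_mul,
    Complex.norm_I, Complex.norm_two, mul_one, ← Complex.ofReal_sin, Complex.norm_real, Real.norm_eq_abs]

lemma aux_sin_prod (m : ℕ) (hm : 0 < m) :
    ∏ k ∈ Finset.range (m - 1), (2 * Real.sin (π * (k + 1) / m)) = m := by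
  obtain ⟨n, rfl⟩ : ∃ n, m = n + 1 := ⟨m - 1, (Nat.succ_pred_eq_of_pos hm).symm⟩
  have hprim := Complex.isPrimitiveRoot_exp (n + 1) (Nat.succ_ne_zero n)
  have hp := hprim.prod_one_sub_pow_eq_order
  have habs := congrArg (‖·‖) hp
  rw [norm_prod] at habs
  have key : ∀ k ∈ Finset.range n,
      ‖1 - Complex.exp (2 * ↑π * Complex.I / (↑(n+1) : ℂ)) ^ (k + 1)‖ =
        2 * Real.sin (π * (k + 1) / (n + 1)) := by
    intro k hk
    rw [Finset.mem_range] at hk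
    rw [← Complex.exp_nat_mul]
    have harg : ((k + 1 : ℕ) : ℂ) * (2 * ↑π * Complex.I / (↑(n+1) : ℂ)) =
        ((2 * π * (k+1) / (n+1) : ℝ) : ℂ) * Complex.I := by
      push_cast; ring
    rw [harg, aux_abs_one_sub_exp]
    have hhalf : (2 * π * (k+1) / (n+1) : ℝ) / 2 = π * (k+1) / (n+1) := by ring
    rw [hhalf, abs_of_nonneg]
    apply Real.sin_nonneg_of_nonneg_of_le_pi
    · positivity
    · rw [div_le_iff₀ (by positivity)]
      nlinarith [Real.pi_pos, (by exact_mod_cast Nat.succ_le_of_lt hk : ((k:ℝ) + 1) ≤ n)]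
  rw [Finset.prod_congr rfl key] at habs
  simp only [Nat.add_sub_cancel]
  rw [show ((n : ℂ) + 1) = ((n + 1 : ℕ) : ℂ) by push_cast; ring, Complex.norm_natCast] at habs
  push_cast at habs ⊢
  exact habs

lemma aux_Gamma_prod_sq (m : ℕ) (hm : 0 < m) :
    (∏ j ∈ Finset.range (m - 1), Real.Gamma (((j : ℝ) + 1) / m)) ^ 2 = (2*π)^(m-1) / m := by
  have hrev : ∏ j ∈ Finset.range (m - 1), Real.Gamma (((j : ℝ) + 1) / m)
      = ∏ j ∈ Finset.range (m - 1), Real.Gamma (1 - ((j : ℝ) + 1) / m) := by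
    rw [← Finset.prod_range_reflect]
    refine Finset.prod_congr rfl fun j hj => ?_
    rw [Finset.mem_range] at hj
    congr 1
    have h1 : ((m - 1 - 1 - j : ℕ) : ℝ) = (m : ℝ) - 2 - j := by
      have : m - 1 - 1 - j = m - (2 + j) := by omega
      rw [this, Nat.cast_sub (by omega)]
      push_cast; ring
    rw [h1]
    field_simp
    ring
  have hsin : ∏ k ∈ Finset.range (m - 1), Real.sin (π * (k + 1) / m) = m / 2 ^ (m - 1) := by
    have h := aux_sin_prod m hm
    rw [Finset.prod_mul_distrib, Finset.prod_const, Finset.card_range] at h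
    field_simp at h ⊢
    linarith
  calc (∏ j ∈ Finset.range (m - 1), Real.Gamma (((j : ℝ) + 1) / m)) ^ 2
      = ∏ j ∈ Finset.range (m - 1),
          (Real.Gamma (((j : ℝ) + 1) / m) * Real.Gamma (1 - ((j : ℝ) + 1) / m)) := by
        rw [Finset.prod_mul_distrib, sq, ← hrev]
    _ = ∏ j ∈ Finset.range (m - 1), π / Real.sin (π * ((j : ℝ) + 1) / m) := by
        refine Finset.prod_congr rfl fun j hj => ?_
        rw [Real.Gamma_mul_Gamma_one_sub]
        ring_nf
    _ = π ^ (m - 1) / ∏ k ∈ Finset.range (m - 1), Real.sin (π * (k + 1) / m) := by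
        rw [Finset.prod_div_distrib, Finset.prod_const, Finset.card_range]
    _ = (2*π)^(m-1) / m := by
        rw [hsin, mul_pow]
        have h2 : (0:ℝ) < 2 ^ (m-1) := by positivity
        field_simp

noncomputable def gaussF (m : ℕ) (y : ℝ) : ℝ :=
  (2*π) ^ (-(((m:ℝ)-1)/2)) * (m:ℝ) ^ (y - 1/2) * ∏ j ∈ Finset.range m, Real.Gamma ((y + j) / m)

lemma gaussF_pos (m : ℕ) (hm : 0 < m) {y : ℝ} (hy : 0 < y) : 0 < gaussF m y := by
  have hm' : (0:ℝ) < m := by exact_mod_cast hm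
  refine mul_pos (mul_pos (rpow_pos_of_pos (by positivity) _) (rpow_pos_of_pos hm' _))
    (Finset.prod_pos fun j hj => Real.Gamma_pos_of_pos (by positivity))

lemma gaussF_feq (m : ℕ) (hm : 0 < m) {y : ℝ} (hy : 0 < y) :
    gaussF m (y + 1) = y * gaussF m y := by
  have hm' : (0:ℝ) < m := by exact_mod_cast hm
  set g : ℕ → ℝ := fun j => Real.Gamma ((y + j) / m) with hg
  have hg0 : g 0 = Real.Gamma (y / m) := by simp [hg]
  have hgm : g m = (y / m) * g 0 := by
    have h1 : (y + (m:ℝ)) / m = y / m + 1 := by field_simp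
    show Real.Gamma ((y + (m:ℝ)) / m) = y / m * Real.Gamma ((y + (0:ℕ)) / m)
    rw [h1, Real.Gamma_add_one (by positivity)]
    norm_num
  have hg0ne : g 0 ≠ 0 := by
    rw [hg0]; exact (Real.Gamma_pos_of_pos (by positivity)).ne'
  have hprod : ∏ j ∈ Finset.range m, g (j + 1) = (y / m) * ∏ j ∈ Finset.range m, g j := by
    have e1 := Finset.prod_range_succ' g m
    have e2 := Finset.prod_range_succ g m
    rw [e2, hgm] at e1
    field_simp at e1 ⊢
    rw [mul_comm] at e1
    exact mul_right_cancel₀ hg0ne (by linear_combination (-g 0) * e1)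
  have hshift : ∏ j ∈ Finset.range m, Real.Gamma ((y + 1 + j) / m)
      = ∏ j ∈ Finset.range m, g (j + 1) := by
    refine Finset.prod_congr rfl fun j hj => ?_
    show Real.Gamma ((y + 1 + j) / m) = Real.Gamma ((y + ((j:ℕ)+1 : ℕ)) / m)
    congr 1
    push_cast
    ring
  rw [gaussF, gaussF, hshift, hprod]
  rw [show y + 1 - 1/2 = (y - 1/2) + 1 by ring, Real.rpow_add_one hm'.ne']
  field_simp
  ring

lemma gaussF_one (m : ℕ) (hm : 0 < m) : gaussF m 1 = 1 := by
  have hm' : (0:ℝ) < m := by exact_mod_cast hm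
  have hpos := gaussF_pos m hm one_pos
  have hsq : (gaussF m 1) ^ 2 = 1 := by
    have hprod : ∏ j ∈ Finset.range m, Real.Gamma ((1 + (j:ℝ)) / m)
        = ∏ j ∈ Finset.range (m-1), Real.Gamma (((j:ℝ) + 1) / m) := by
      obtain ⟨n, rfl⟩ : ∃ n, m = n + 1 := ⟨m - 1, (Nat.succ_pred_eq_of_pos hm).symm⟩
      rw [Finset.prod_range_succ]
      simp only [Nat.add_sub_cancel]
      have : (1 + (n:ℝ)) / (n+1 : ℕ) = 1 := by push_cast; rw [div_eq_one_iff_eq (by positivity)]; ring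
      rw [this, Real.Gamma_one, mul_one]
      exact Finset.prod_congr rfl fun j _ => by rw [add_comm 1 (j:ℝ)]
    rw [gaussF, hprod, mul_pow, mul_pow, ← Real.rpow_natCast ((2*π) ^ (-(((m:ℝ)-1)/2))) 2,
      ← Real.rpow_natCast ((m:ℝ) ^ ((1:ℝ) - 1/2)) 2, ← Real.rpow_mul (by positivity),
      ← Real.rpow_mul hm'.le, aux_Gamma_prod_sq m hm]
    push_cast
    rw [show (1 - 1/2 : ℝ) * 2 = 1 by norm_num, Real.rpow_one]
    rw [show ((2:ℝ)*π)^((m:ℕ) - 1 : ℕ) = ((2:ℝ)*π)^((((m:ℕ) - 1 : ℕ)):ℝ) by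
      rw [Real.rpow_natCast]]
    rw [show ((((m:ℕ) - 1 : ℕ)):ℝ) = (m:ℝ) - 1 by
      rw [Nat.cast_sub hm]; norm_num]
    rw [show -(((m:ℝ)-1)/2) * 2 = -((m:ℝ)-1) by ring, Real.rpow_neg (by positivity)]
    field_simp
  have hz : (gaussF m 1 - 1) * (gaussF m 1 + 1) = 0 := by nlinarith
  rcases mul_eq_zero.mp hz with h | h
  · linarith
  · linarith

lemma conv_affine' {m : ℝ} (hm : 0 < m) {d : ℝ} (hd : 0 ≤ d) :
    ConvexOn ℝ (Set.Ioi (0:ℝ)) (fun y => Real.log (Real.Gamma ((y + d) / m))) := by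
  refine ⟨convex_Ioi 0, fun x hx z hz a b ha hb hab => ?_⟩
  have hx0 : (0:ℝ) < x := hx
  have hz0 : (0:ℝ) < z := hz
  have hx' : (x + d) / m ∈ Set.Ioi (0:ℝ) := Set.mem_Ioi.mpr (by positivity)
  have hz' : (z + d) / m ∈ Set.Ioi (0:ℝ) := Set.mem_Ioi.mpr (by positivity)
  have key := Real.convexOn_log_Gamma.2 hx' hz' ha hb hab
  simp only [Function.comp_apply, smul_eq_mul] at key ⊢
  have harg : (a * x + b * z + d) / m = a * ((x + d) / m) + b * ((z + d) / m) := by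
    have h5 : a * ((x + d) / m) + b * ((z + d) / m) = (a*(x+d) + b*(z+d))/m := by ring
    rw [h5]
    congr 1
    linear_combination (-d) * hab
  rw [harg]
  exact key

lemma conv_sum (m : ℕ) (hm : 0 < m) (k : ℕ) :
    ConvexOn ℝ (Set.Ioi (0:ℝ))
      (fun y => ∑ j ∈ Finset.range k, Real.log (Real.Gamma ((y + (j:ℝ)) / m))) := by
  have hm' : (0:ℝ) < m := by exact_mod_cast hm
  induction k with
  | zero => simpa using convexOn_const (0:ℝ) (convex_Ioi 0)
  | succ n ih =>
      simp only [Finset.sum_range_succ]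
      exact ih.add (conv_affine' hm' (by positivity : (0:ℝ) ≤ (n:ℝ)))

lemma gaussF_logeq (m : ℕ) (hm : 0 < m) :
    Set.EqOn (Real.log ∘ gaussF m)
      (fun y => (∑ j ∈ Finset.range m, Real.log (Real.Gamma ((y + (j:ℝ)) / m)))
        + Real.log m * y
        + ((-(((m:ℝ)-1)/2)) * Real.log (2*π) - (1/2) * Real.log m)) (Set.Ioi 0) := by
  intro y hy
  have hy0 : (0:ℝ) < y := hy
  have hm' : (0:ℝ) < m := by exact_mod_cast hm
  have h1 : ((2*π:ℝ) ^ (-(((m:ℝ)-1)/2))) ≠ 0 := (rpow_pos_of_pos (by positivity) _).ne'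
  have h2 : ((m:ℝ) ^ (y - 1/2)) ≠ 0 := (rpow_pos_of_pos hm' _).ne'
  have h3 : ∀ j ∈ Finset.range m, Real.Gamma ((y + (j:ℝ)) / m) ≠ 0 := fun j _ =>
    (Real.Gamma_pos_of_pos (by positivity)).ne'
  have h4 : ∏ j ∈ Finset.range m, Real.Gamma ((y + (j:ℝ)) / m) ≠ 0 := Finset.prod_ne_zero_iff.mpr h3
  simp only [Function.comp_apply, gaussF]
  rw [Real.log_mul (mul_ne_zero h1 h2) h4, Real.log_mul h1 h2, Real.log_rpow (by positivity),
    Real.log_rpow hm', Real.log_prod h3]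
  ring

lemma gaussF_convex (m : ℕ) (hm : 0 < m) :
    ConvexOn ℝ (Set.Ioi (0:ℝ)) (Real.log ∘ gaussF m) := by
  have hm1 : (1:ℝ) ≤ m := by exact_mod_cast hm
  refine ConvexOn.congr ?_ (gaussF_logeq m hm).symm
  refine ((conv_sum m hm m).add ?_).add_const _
  exact (convexOn_id (convex_Ioi (0:ℝ))).smul (Real.log_nonneg hm1)

lemma gauss_multiplication (m : ℕ) (hm : 0 < m) {x : ℝ} (hx : 0 < x) :
    ∏ j ∈ Finset.range m, Real.Gamma (x + (j:ℝ)/m) =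
      (2*π)^(((m:ℝ)-1)/2) * (m:ℝ)^((1:ℝ)/2 - m*x) * Real.Gamma ((m:ℝ)*x) := by
  have hm' : (0:ℝ) < m := by exact_mod_cast hm
  have h := Real.eq_Gamma_of_log_convex (gaussF_convex m hm)
    (fun {y} hy => gaussF_feq m hm hy) (fun {y} hy => gaussF_pos m hm hy)
    (gaussF_one m hm) (Set.mem_Ioi.mpr (by positivity : (0:ℝ) < (m:ℝ)*x))
  rw [gaussF] at h
  have hconv : ∏ j ∈ Finset.range m, Real.Gamma (((m:ℝ)*x + (j:ℝ)) / m)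
      = ∏ j ∈ Finset.range m, Real.Gamma (x + (j:ℝ)/m) := by
    refine Finset.prod_congr rfl fun j _ => ?_
    congr 1
    field_simp
  rw [hconv] at h
  have e1 : (2*π:ℝ)^(((m:ℝ)-1)/2) * (2*π)^(-(((m:ℝ)-1)/2)) = 1 := by
    rw [← Real.rpow_add (by positivity)]; norm_num
  have e2 : (m:ℝ)^((1:ℝ)/2 - (m:ℝ)*x) * (m:ℝ)^((m:ℝ)*x - 1/2) = 1 := by
    rw [← Real.rpow_add hm']; norm_num
  calc ∏ j ∈ Finset.range m, Real.Gamma (x + (j:ℝ)/m)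
      = ((2*π:ℝ)^(((m:ℝ)-1)/2) * (2*π)^(-(((m:ℝ)-1)/2)))
        * ((m:ℝ)^((1:ℝ)/2 - (m:ℝ)*x) * (m:ℝ)^((m:ℝ)*x - 1/2))
        * ∏ j ∈ Finset.range m, Real.Gamma (x + (j:ℝ)/m) := by rw [e1, e2]; ring
    _ = (2*π)^(((m:ℝ)-1)/2) * (m:ℝ)^((1:ℝ)/2 - m*x) * Real.Gamma ((m:ℝ)*x) := by
        rw [← h]; ring

lemma aux_beta {a b : ℝ} (ha : 0 < a) (hb : 0 < b) :
    ∫ x in Set.Ioo (0:ℝ) 1, x ^ (a-1) * (1-x) ^ (b-1)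
      = Real.Gamma a * Real.Gamma b / Real.Gamma (a+b) := by
  have ha' : 0 < (a:ℂ).re := by simpa using ha
  have hb' : 0 < (b:ℂ).re := by simpa using hb
  have hc := Complex.Gamma_mul_Gamma_eq_betaIntegral ha' hb'
  have hBI : Complex.betaIntegral a b
      = ((∫ x in Set.Ioo (0:ℝ) 1, x ^ (a-1) * (1-x) ^ (b-1) : ℝ) : ℂ) := by
    rw [Complex.betaIntegral, intervalIntegral.integral_of_le zero_le_one,
      ← MeasureTheory.integral_Ioc_eq_integral_Ioo]
    have hcong : ∫ (x : ℝ) in Set.Ioc (0:ℝ) 1, (x:ℂ) ^ ((a:ℂ) - 1) * (1 - (x:ℂ)) ^ ((b:ℂ) - 1)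
        = ∫ (x : ℝ) in Set.Ioc (0:ℝ) 1, ((x ^ (a-1) * (1-x) ^ (b-1) : ℝ) : ℂ) := by
      refine setIntegral_congr_fun measurableSet_Ioc fun x hx => ?_
      obtain ⟨hx0, hx1⟩ := hx
      rw [Complex.ofReal_mul, Complex.ofReal_cpow hx0.le, Complex.ofReal_cpow (by linarith),
        Complex.ofReal_sub, Complex.ofReal_sub, Complex.ofReal_one]
      norm_cast
    rw [hcong]
    exact integral_ofReal
  rw [hBI, ← Complex.ofReal_add, Complex.Gamma_ofReal, Complex.Gamma_ofReal,
    Complex.Gamma_ofReal, ← Complex.ofReal_mul, ← Complex.ofReal_mul] at hc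
  have := Complex.ofReal_inj.mp hc
  have hG : Real.Gamma (a+b) ≠ 0 := (Real.Gamma_pos_of_pos (by linarith)).ne'
  field_simp [this]
  rw [this]; ring

lemma aux_dup_prod (K : ℕ) {a : ℝ} (ha : 0 < a) :
    ∏ k ∈ Finset.Icc 1 K, Real.Gamma ((2:ℝ)^(k-1) * a + 1/2)
      = Real.Gamma ((2:ℝ)^K * a) / Real.Gamma a * π^((K:ℝ)/2)
        * (2:ℝ)^((K:ℝ) - (2*(2:ℝ)^K - 2) * a) := by
  have hGa : Real.Gamma a ≠ 0 := (Real.Gamma_pos_of_pos ha).ne'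
  induction K with
  | zero =>
      simp only [Finset.Icc_self, Nat.cast_zero, pow_zero, one_mul, zero_div, rpow_zero]
      rw [show Finset.Icc 1 0 = (∅ : Finset ℕ) by rfl, Finset.prod_empty]
      rw [show (0:ℝ) - (2*1 - 2)*a = 0 by ring, rpow_zero]
      field_simp
  | succ n ih =>
      have hne : Real.Gamma ((2:ℝ)^n * a) ≠ 0 :=
        (Real.Gamma_pos_of_pos (by positivity)).ne'
      have h2 : Real.Gamma ((2:ℝ)^n * a + 1/2)
          = Real.Gamma ((2:ℝ)^(n+1) * a) * (2:ℝ)^(1 - 2*((2:ℝ)^n * a)) * π^((1:ℝ)/2)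
            / Real.Gamma ((2:ℝ)^n * a) := by
        have hdup := Real.Gamma_mul_Gamma_add_half ((2:ℝ)^n * a)
        rw [Real.sqrt_eq_rpow] at hdup
        rw [eq_div_iff hne, show (2:ℝ)^(n+1) * a = 2 * ((2:ℝ)^n * a) by ring]
        linear_combination hdup
      rw [Finset.prod_Icc_succ_top (Nat.succ_le_succ (Nat.zero_le n)), ih,
        show n + 1 - 1 = n from rfl, h2]
      have hπ : π^((n:ℝ)/2) * π^((1:ℝ)/2) = π^(((n:ℝ)+1)/2) := by
        rw [← Real.rpow_add pi_pos]; ring_nf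
      have h2e : (2:ℝ)^((n:ℝ) - (2*(2:ℝ)^n - 2)*a) * (2:ℝ)^(1 - 2*((2:ℝ)^n*a))
          = (2:ℝ)^(((n:ℝ)+1) - (2*(2:ℝ)^(n+1) - 2)*a) := by
        rw [← Real.rpow_add two_pos]; congr 1; ring
      push_cast
      calc Real.Gamma ((2:ℝ)^n * a) / Real.Gamma a * π^((n:ℝ)/2)
            * (2:ℝ)^((n:ℝ) - (2*(2:ℝ)^n - 2)*a)
            * (Real.Gamma ((2:ℝ)^(n+1) * a) * (2:ℝ)^(1 - 2*((2:ℝ)^n * a)) * π^((1:ℝ)/2)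
              / Real.Gamma ((2:ℝ)^n * a))
          = (Real.Gamma ((2:ℝ)^(n+1) * a) / Real.Gamma a)
            * (π^((n:ℝ)/2) * π^((1:ℝ)/2))
            * ((2:ℝ)^((n:ℝ) - (2*(2:ℝ)^n - 2)*a) * (2:ℝ)^(1 - 2*((2:ℝ)^n*a)))
            * (Real.Gamma ((2:ℝ)^n * a) / Real.Gamma ((2:ℝ)^n * a)) := by ring
        _ = Real.Gamma ((2:ℝ)^(n+1) * a) / Real.Gamma a * π^(((n:ℝ)+1)/2)
            * (2:ℝ)^(((n:ℝ)+1) - (2*(2:ℝ)^(n+1) - 2)*a) := by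
            rw [div_self hne, hπ, h2e]; ring

lemma final_alg (m K : ℕ) (hm : 0 < m) (ξ g1 g2 g3 D : ℝ) (hξ : 0 < ξ)
    (h1 : 0 < g1) (h2 : 0 < g2) (h3 : 0 < g3) (hD : 0 < D) :
    1 / g1 ^ m =
      (2^K * (m:ℝ) / (2*π)) ^ ((K:ℝ)/2) / ((2*π) ^ (((m:ℝ)-1)/2) * D) * (1 / ξ ^ ((m:ℝ)*ξ)) *
        ξ ^ ((m:ℝ) + (K:ℝ)/2 + 1/2 - 1) *
        Real.exp ((2:ℝ)^K * ((m:ℝ)*ξ)) *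
        (2:ℝ) ^ ((2 * ((2:ℝ)^K - 1) - (K:ℝ)) * (m:ℝ) * ξ) *
        ((2*π) ^ (((m:ℝ)-1)/2) * (m:ℝ) ^ ((1:ℝ)/2 - (m:ℝ)*ξ) * g2 / g1 * D *
          (ξ * g1)⁻¹ ^ (m-1)) *
        (g3 / g2 * π ^ ((K:ℝ)/2) * (2:ℝ) ^ ((K:ℝ) - (2*(2:ℝ)^K - 2) * ((m:ℝ)*ξ)) *
          (1 / ((2:ℝ)^K * ((m:ℝ)*ξ))) ^ (((2:ℝ)^K - 1) * ((m:ℝ)*ξ) + (K:ℝ)/2)) *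
        (((2:ℝ)^K * ((m:ℝ)*ξ)) ^ ((2:ℝ)^K * ((m:ℝ)*ξ) - 1/2) /
          (g3 * Real.exp ((2:ℝ)^K * ((m:ℝ)*ξ)))) := by
  have hπ := pi_pos
  have hm' : (0:ℝ) < m := by exact_mod_cast hm
  have hc : (0:ℝ) < (2:ℝ)^K * ((m:ℝ)*ξ) := by positivity
  have h2K : (0:ℝ) < (2:ℝ)^K := by positivity
  -- split composite bases
  have hE1 : ((2:ℝ)^K * (m:ℝ) / (2*π)) ^ ((K:ℝ)/2)
      = (2:ℝ) ^ ((K:ℝ)*((K:ℝ)/2)) * (m:ℝ)^((K:ℝ)/2)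
        / ((2:ℝ)^((K:ℝ)/2) * π^((K:ℝ)/2)) := by
    rw [Real.div_rpow (by positivity) (by positivity),
      Real.mul_rpow (by positivity) (by positivity),
      Real.mul_rpow (by positivity) (by positivity),
      ← Real.rpow_natCast (2:ℝ) K, ← Real.rpow_mul (by norm_num : (0:ℝ) ≤ 2)]
  have hE2 : ((2:ℝ)*π) ^ (((m:ℝ)-1)/2)
      = (2:ℝ)^(((m:ℝ)-1)/2) * π^(((m:ℝ)-1)/2) :=
    Real.mul_rpow (by norm_num) hπ.le
  have hE8 : ((ξ * g1)⁻¹) ^ (m-1) = ξ ^ ((1:ℝ)-(m:ℝ)) * g1 ^ ((1:ℝ)-(m:ℝ)) := by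
    rw [← Real.rpow_natCast ((ξ*g1)⁻¹) (m-1),
      show ((ξ*g1)⁻¹ : ℝ) = (ξ*g1) ^ (-1 : ℝ) by rw [Real.rpow_neg_one],
      ← Real.rpow_mul (by positivity : (0:ℝ) ≤ ξ*g1),
      Real.mul_rpow hξ.le h1.le]
    congr 2 <;>
    · rw [Nat.cast_sub hm]
      push_cast
      ring
  have hE11 : (1/((2:ℝ)^K * ((m:ℝ)*ξ))) ^ (((2:ℝ)^K - 1) * ((m:ℝ)*ξ) + (K:ℝ)/2)
      = (2:ℝ) ^ (-((K:ℝ)*(((2:ℝ)^K - 1) * ((m:ℝ)*ξ) + (K:ℝ)/2)))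
        * (m:ℝ) ^ (-(((2:ℝ)^K - 1) * ((m:ℝ)*ξ) + (K:ℝ)/2))
        * ξ ^ (-(((2:ℝ)^K - 1) * ((m:ℝ)*ξ) + (K:ℝ)/2)) := by
    rw [one_div, ← Real.rpow_neg_one ((2:ℝ)^K * ((m:ℝ)*ξ)),
      ← Real.rpow_mul hc.le,
      Real.mul_rpow (by positivity) (by positivity),
      Real.mul_rpow (by positivity) (by positivity),
      ← Real.rpow_natCast (2:ℝ) K, ← Real.rpow_mul (by norm_num : (0:ℝ) ≤ 2)]
    rw [← mul_assoc, Real.rpow_natCast (2:ℝ) K]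
    ring_nf
  have hE12 : ((2:ℝ)^K * ((m:ℝ)*ξ)) ^ ((2:ℝ)^K * ((m:ℝ)*ξ) - 1/2)
      = (2:ℝ) ^ ((K:ℝ)*((2:ℝ)^K * ((m:ℝ)*ξ) - 1/2))
        * (m:ℝ) ^ ((2:ℝ)^K * ((m:ℝ)*ξ) - 1/2)
        * ξ ^ ((2:ℝ)^K * ((m:ℝ)*ξ) - 1/2) := by
    rw [Real.mul_rpow (by positivity) (by positivity),
      Real.mul_rpow (by positivity) (by positivity),
      ← Real.rpow_natCast (2:ℝ) K, ← Real.rpow_mul (by norm_num : (0:ℝ) ≤ 2), mul_assoc]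
  rw [hE1, hE2, hE8, hE11, hE12, ← Real.rpow_natCast g1 m]
  simp only [Real.rpow_def_of_pos two_pos, Real.rpow_def_of_pos hπ,
    Real.rpow_def_of_pos hm', Real.rpow_def_of_pos hξ, Real.rpow_def_of_pos h1]
  rw [← Real.exp_log h1, ← Real.exp_log h2, ← Real.exp_log h3, ← Real.exp_log hD]
  simp only [Real.log_exp, one_div, mul_inv, div_eq_mul_inv, one_mul, mul_one,
    ← Real.exp_neg, ← Real.exp_add]
  rw [Real.exp_eq_exp]
  push_cast
  ring

theorem stmt_8 (m : ℕ) (hm : 0 < m) (K : ℕ) (ξ : ℝ) (hξ : 0 < ξ) :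
    1 / (Real.Gamma ξ) ^ m =
      (((2 : ℝ) ^ K * (m : ℝ) / (2 * π)) ^ ((K : ℝ) / 2) /
          ((2 * π) ^ (((m : ℝ) - 1) / 2) *
            ∏ j ∈ Finset.Icc 2 m, Real.Gamma (((m : ℝ) - (j : ℝ) + 1) / (m : ℝ)))) *
        (1 / ξ ^ ((m : ℝ) * ξ)) * ξ ^ ((m : ℝ) + (K : ℝ) / 2 + 1 / 2 - 1) *
        Real.exp ((2 : ℝ) ^ K * (m : ℝ) * ξ) *
        (2 : ℝ) ^ ((2 * ((2 : ℝ) ^ K - 1) - (K : ℝ)) * (m : ℝ) * ξ) *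
        (∏ j ∈ Finset.Icc 2 m,
          ∫ ρ in Set.Ioo (0 : ℝ) 1,
            ρ ^ (ξ + ((j : ℝ) - 1) / (m : ℝ) - 1) *
              (1 - ρ) ^ (((m : ℝ) - (j : ℝ) + 1) / (m : ℝ) - 1)) *
        (∏ k ∈ Finset.Icc 1 K,
          ∫ t in Set.Ioi (0 : ℝ),
            t ^ ((2 : ℝ) ^ (k - 1) * (m : ℝ) * ξ + 1 / 2 - 1) *
              Real.exp (-t * ((2 : ℝ) ^ K * (m : ℝ) * ξ))) *
        (((2 : ℝ) ^ K * (m : ℝ) * ξ) ^ ((2 : ℝ) ^ K * (m : ℝ) * ξ - 1 / 2) /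
          (Real.Gamma ((2 : ℝ) ^ K * (m : ℝ) * ξ) *
            Real.exp ((2 : ℝ) ^ K * (m : ℝ) * ξ))) := by
  have hm' : (0:ℝ) < m := by exact_mod_cast hm
  have hGξ : 0 < Real.Gamma ξ := Real.Gamma_pos_of_pos hξ
  -- Step A
  have hbeta : (∏ j ∈ Finset.Icc 2 m,
          ∫ ρ in Set.Ioo (0 : ℝ) 1,
            ρ ^ (ξ + ((j : ℝ) - 1) / (m : ℝ) - 1) *
              (1 - ρ) ^ (((m : ℝ) - (j : ℝ) + 1) / (m : ℝ) - 1))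
      = (∏ j ∈ Finset.Icc 2 m, Real.Gamma (ξ + ((j:ℝ)-1)/m))
        * (∏ j ∈ Finset.Icc 2 m, Real.Gamma (((m:ℝ)-(j:ℝ)+1)/m))
        * ((Real.Gamma (ξ+1))⁻¹) ^ (m-1) := by
    have step : ∀ j ∈ Finset.Icc 2 m,
        (∫ ρ in Set.Ioo (0 : ℝ) 1,
            ρ ^ (ξ + ((j : ℝ) - 1) / (m : ℝ) - 1) *
              (1 - ρ) ^ (((m : ℝ) - (j : ℝ) + 1) / (m : ℝ) - 1))
        = Real.Gamma (ξ + ((j:ℝ)-1)/m) * Real.Gamma (((m:ℝ)-(j:ℝ)+1)/m)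
            * (Real.Gamma (ξ+1))⁻¹ := by
      intro j hj
      rw [Finset.mem_Icc] at hj
      have hj2 : (2:ℝ) ≤ (j:ℝ) := by exact_mod_cast hj.1
      have hjm : (j:ℝ) ≤ (m:ℝ) := by exact_mod_cast hj.2
      have ha : 0 < ξ + ((j:ℝ)-1)/m := by
        have h0 : (0:ℝ) ≤ ((j:ℝ)-1)/m := div_nonneg (by linarith) hm'.le
        linarith
      have hb : 0 < ((m:ℝ)-(j:ℝ)+1)/m := div_pos (by linarith) hm'
      rw [aux_beta ha hb, show ξ + ((j:ℝ)-1)/m + ((m:ℝ)-(j:ℝ)+1)/m = ξ + 1 by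
        field_simp; ring]
      rw [div_eq_mul_inv]
    rw [Finset.prod_congr rfl step, Finset.prod_mul_distrib, Finset.prod_mul_distrib,
      Finset.prod_const, Nat.card_Icc, show m + 1 - 2 = m - 1 by omega]
  -- Step B
  have hB : ∏ j ∈ Finset.Icc 2 m, Real.Gamma (ξ + ((j:ℝ)-1)/m)
      = (2*π)^(((m:ℝ)-1)/2) * (m:ℝ)^((1:ℝ)/2 - m*ξ) * Real.Gamma ((m:ℝ)*ξ)
        / Real.Gamma ξ := by
    have h1 : ∏ j ∈ Finset.Icc 2 m, Real.Gamma (ξ + ((j:ℝ)-1)/m)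
        = ∏ i ∈ Finset.range (m-1), Real.Gamma (ξ + ((i:ℝ)+1)/m) := by
      rw [show Finset.Icc 2 m = Finset.Ico 2 (m+1) by rw [Finset.Ico_add_one_right_eq_Icc],
        Finset.prod_Ico_eq_prod_range, show m + 1 - 2 = m - 1 by omega]
      refine Finset.prod_congr rfl fun i hi => ?_
      congr 1
      push_cast
      ring
    have h3 : ∏ j ∈ Finset.range m, Real.Gamma (ξ + (j:ℝ)/m)
        = (∏ i ∈ Finset.range (m-1), Real.Gamma (ξ + ((i:ℝ)+1)/m)) * Real.Gamma ξ := by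
      obtain ⟨n, rfl⟩ : ∃ n, m = n+1 := ⟨m-1, (Nat.succ_pred_eq_of_pos hm).symm⟩
      rw [Finset.prod_range_succ']
      simp only [Nat.add_sub_cancel, Nat.cast_zero, zero_div, add_zero]
      refine congrArg (· * Real.Gamma ξ) (Finset.prod_congr rfl fun i hi => ?_)
      congr 1
      push_cast
      ring
    rw [h1, eq_div_iff hGξ.ne', ← h3, gauss_multiplication m hm hξ]
  -- Step C
  have hC : (∏ k ∈ Finset.Icc 1 K,
        ∫ t in Set.Ioi (0 : ℝ),
          t ^ ((2 : ℝ) ^ (k - 1) * (m : ℝ) * ξ + 1 / 2 - 1) *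
            Real.exp (-t * ((2 : ℝ) ^ K * (m : ℝ) * ξ)))
      = (∏ k ∈ Finset.Icc 1 K, Real.Gamma ((2:ℝ)^(k-1) * ((m:ℝ)*ξ) + 1/2))
        * (1/((2:ℝ)^K * (m:ℝ) * ξ)) ^ (((2:ℝ)^K - 1) * ((m:ℝ)*ξ) + (K:ℝ)/2) := by
    have step : ∀ k ∈ Finset.Icc 1 K,
        (∫ t in Set.Ioi (0 : ℝ),
          t ^ ((2 : ℝ) ^ (k - 1) * (m : ℝ) * ξ + 1 / 2 - 1) *
            Real.exp (-t * ((2 : ℝ) ^ K * (m : ℝ) * ξ)))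
        = Real.Gamma ((2:ℝ)^(k-1) * ((m:ℝ)*ξ) + 1/2)
          * (1/((2:ℝ)^K * (m:ℝ) * ξ)) ^ ((2:ℝ)^(k-1) * ((m:ℝ)*ξ) + 1/2) := by
      intro k hk
      have hint := integral_rpow_mul_exp_neg_mul_Ioi
        (a := (2:ℝ)^(k-1) * (m:ℝ) * ξ + 1/2) (r := (2:ℝ)^K * (m:ℝ) * ξ)
        (by positivity) (by positivity)
      have hcong : (∫ t in Set.Ioi (0 : ℝ),
          t ^ ((2 : ℝ) ^ (k - 1) * (m : ℝ) * ξ + 1 / 2 - 1) *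
            Real.exp (-t * ((2 : ℝ) ^ K * (m : ℝ) * ξ)))
          = ∫ t in Set.Ioi (0 : ℝ),
          t ^ ((2 : ℝ) ^ (k - 1) * (m : ℝ) * ξ + 1 / 2 - 1) *
            Real.exp (-((2 : ℝ) ^ K * (m : ℝ) * ξ * t)) := by
        refine setIntegral_congr_fun measurableSet_Ioi fun t ht => ?_
        ring_nf
      rw [hcong, hint, mul_comm, mul_assoc ((2:ℝ)^(k-1))]
    rw [Finset.prod_congr rfl step, Finset.prod_mul_distrib,
      ← Real.rpow_sum_of_pos (by positivity) _ _]
    congr 1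
    congr 1
    rw [show Finset.Icc 1 K = Finset.Ico 1 (K+1) by rw [Finset.Ico_add_one_right_eq_Icc],
      Finset.sum_Ico_eq_sum_range, show K + 1 - 1 = K by omega]
    rw [Finset.sum_add_distrib, Finset.sum_const, Finset.card_range]
    have hgeo : ∑ i ∈ Finset.range K, ((2:ℝ)^(1 + i - 1) * ((m:ℝ)*ξ))
        = ((2:ℝ)^K - 1) * ((m:ℝ)*ξ) := by
      rw [← Finset.sum_mul]
      congr 1
      have : ∀ i, 1 + i - 1 = i := fun i => by omega
      simp_rw [this]
      rw [geom_sum_eq (by norm_num : (2:ℝ) ≠ 1) K]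
      norm_num
    rw [hgeo]
    push_cast
    ring
  rw [hbeta, hB, hC, aux_dup_prod K (show (0:ℝ) < (m:ℝ)*ξ by positivity),
    Real.Gamma_add_one hξ.ne',
    show (2:ℝ)^K * (m:ℝ) * ξ = (2:ℝ)^K * ((m:ℝ)*ξ) from mul_assoc _ _ _]
  set D := ∏ j ∈ Finset.Icc 2 m, Real.Gamma (((m : ℝ) - (j : ℝ) + 1) / (m : ℝ)) with hDdef
  exact final_alg m K hm ξ (Real.Gamma ξ) (Real.Gamma ((m:ℝ)*ξ))
    (Real.Gamma ((2:ℝ)^K * ((m:ℝ)*ξ))) D hξ hGξ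
    (Real.Gamma_pos_of_pos (by positivity))
    (Real.Gamma_pos_of_pos (by positivity))
    (Finset.prod_pos fun j hj => Real.Gamma_pos_of_pos (by
      rw [Finset.mem_Icc] at hj
      have hjm : (j:ℝ) ≤ (m:ℝ) := by exact_mod_cast hj.2
      exact div_pos (by linarith) hm'))
end

section
/- Let m be a positive integer and define g(x) = (mx)^{mx - 1/2} / (Γ(mx) e^{mx}) for x > 0. Then for all ξ* > 0 and ξ > 0, min{1, g(ξ*)/g(ξ)} ≥ e^{-1/(12 m ξ*)} ≥ 1 - 1/(12 m ξ*). -/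
open Real Filter Topology


noncomputable def EE (y : ℝ) : ℝ := Real.log (Real.Gamma y) - (y - 1/2) * Real.log y + y

lemma philog_hasSum {a : ℝ} (ha : 0 < a) :
    HasSum (fun k : ℕ => (1:ℝ)/(2*(k:ℝ)+1) * ((1/(2*a+1))^2)^k)
      ((a + 1/2) * Real.log (1 + a⁻¹)) := by
  have h := (Real.hasSum_log_one_add_inv ha).mul_left (a + 1/2)
  convert h using 2 with k
  case e'_3 => rfl
  conv_rhs => rw [pow_succ, pow_mul]
  have h1 : (2*a+1) ≠ 0 := by positivity
  field_simp

lemma philog_tail_hasSum {a : ℝ} (ha : 0 < a) :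
    HasSum (fun k : ℕ => (1:ℝ)/(2*((k:ℝ)+1)+1) * ((1/(2*a+1))^2)^(k+1))
      ((a + 1/2) * Real.log (1 + a⁻¹) - 1) := by
  have key := philog_hasSum ha
  set f : ℕ → ℝ := fun k => (1:ℝ)/(2*(k:ℝ)+1) * ((1/(2*a+1))^2)^k with hf
  have h2 : HasSum (fun n : ℕ => f (n + 1)) ((a + 1/2) * Real.log (1 + a⁻¹) - 1) := by
    rw [hasSum_nat_add_iff]
    simpa [hf] using key
  convert h2 using 2 with k
  simp only [hf]
  push_cast
  ring

lemma philog_lb {a : ℝ} (ha : 0 < a) : 1 ≤ (a + 1/2) * Real.log (1 + a⁻¹) := by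
  have h := (philog_tail_hasSum ha).nonneg (fun k => by positivity)
  linarith

lemma philog_ub {a : ℝ} (ha : 0 < a) :
    (a + 1/2) * Real.log (1 + a⁻¹) ≤ 1 + (1/(12*a) - 1/(12*(a+1))) := by
  set t : ℝ := (1/(2*a+1))^2 with ht
  have ht0 : 0 ≤ t := sq_nonneg _
  have ht1 : t < 1 := by
    rw [ht, div_pow, one_pow, div_lt_one (by positivity)]
    nlinarith
  have geo : HasSum (fun k : ℕ => (1/3 * t) * t ^ k) ((1/3 * t) * (1 - t)⁻¹) :=
    (hasSum_geometric_of_lt_one ht0 ht1).mul_left _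
  have hle : ∀ k : ℕ, (1:ℝ)/(2*((k:ℝ)+1)+1) * t^(k+1) ≤ (1/3 * t) * t ^ k := by
    intro k
    have hk : (0:ℝ) ≤ (k:ℝ) := Nat.cast_nonneg k
    have h3 : (1:ℝ)/(2*((k:ℝ)+1)+1) ≤ 1/3 :=
      one_div_le_one_div_of_le (by norm_num) (by linarith)
    calc (1:ℝ)/(2*((k:ℝ)+1)+1) * t^(k+1) ≤ 1/3 * t^(k+1) :=
          mul_le_mul_of_nonneg_right h3 (pow_nonneg ht0 _)
      _ = (1/3 * t) * t ^ k := by rw [pow_succ]; ring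
  have key := hasSum_le hle (philog_tail_hasSum ha) geo
  have h3 : (0:ℝ) < 1 - t := by linarith
  have heq : (1/3 * t) * (1 - t)⁻¹ = 1/(12*a) - 1/(12*(a+1)) := by
    rw [mul_inv_eq_iff_eq_mul₀ h3.ne', ht]
    have h1 : (2*a+1) ≠ 0 := by positivity
    field_simp
    ring
  linarith

lemma EE_diff {a : ℝ} (ha : 0 < a) :
    EE a - EE (a + 1) = (a + 1/2) * Real.log (1 + a⁻¹) - 1 := by
  have hG : Real.Gamma (a + 1) = a * Real.Gamma a := Real.Gamma_add_one ha.ne'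
  have hGpos : 0 < Real.Gamma a := Real.Gamma_pos_of_pos ha
  have hlog : Real.log (Real.Gamma (a+1)) = Real.log a + Real.log (Real.Gamma a) := by
    rw [hG, Real.log_mul ha.ne' hGpos.ne']
  have hl1 : Real.log (1 + a⁻¹) = Real.log (a+1) - Real.log a := by
    rw [← Real.log_div (by positivity) ha.ne']
    congr 1
    field_simp
  rw [EE, EE, hlog, hl1]
  ring

lemma EE_step {a : ℝ} (ha : 0 < a) :
    0 ≤ EE a - EE (a + 1) ∧ EE a - EE (a+1) ≤ 1/(12*a) - 1/(12*(a+1)) := by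
  rw [EE_diff ha]
  constructor
  · linarith [philog_lb ha]
  · linarith [philog_ub ha]


lemma tendsto_mul_log (b d e : ℝ) :
    Tendsto (fun x : ℝ => (x + d) * Real.log (1 + b/(x + e))) atTop (𝓝 b) := by
  have h2 : Tendsto (fun x : ℝ => x + e) atTop atTop :=
    tendsto_atTop_add_const_right _ e tendsto_id
  have h3 : Tendsto (fun x : ℝ => (x + e) * Real.log (1 + b/(x + e))) atTop (𝓝 b) :=
    (Real.tendsto_mul_log_one_add_div_atTop b).comp h2
  have h4 : Tendsto (fun x : ℝ => 1 + (d - e) * (x + e)⁻¹) atTop (𝓝 (1 + (d-e) * 0)) :=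
    tendsto_const_nhds.add (((tendsto_inv_atTop_zero).comp h2).const_mul (d-e))
  rw [mul_zero, add_zero] at h4
  have h5 := h3.mul h4
  rw [mul_one] at h5
  apply h5.congr'
  filter_upwards [eventually_gt_atTop (|e| + 1)] with x hx
  have hxe : x + e ≠ 0 := by
    have := neg_abs_le e
    intro h
    linarith
  field_simp
  ring


noncomputable def cSt : ℝ := Real.log (Real.sqrt π) + (1/2) * Real.log 2


-- EE at integer+1 in terms of stirlingSeq
lemma EE_eq_stirling (n : ℕ) (hn : 1 ≤ n) :
    EE ((n:ℝ) + 1) = Real.log (Stirling.stirlingSeq n) + 1 + (1/2) * Real.log 2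
      - ((n:ℝ) + 1/2) * Real.log (1 + ((n:ℝ))⁻¹) := by
  have hn0 : (0:ℝ) < (n:ℝ) := by exact_mod_cast hn
  have hΓ : Real.Gamma ((n:ℝ) + 1) = (n.factorial : ℝ) := Real.Gamma_nat_eq_factorial n
  have hst := Stirling.log_stirlingSeq_formula n
  have hlogdiv : Real.log ((n:ℝ) / Real.exp 1) = Real.log n - 1 := by
    rw [Real.log_div hn0.ne' (Real.exp_ne_zero 1), Real.log_exp]
  have hlog2n : Real.log (2 * (n:ℝ)) = Real.log 2 + Real.log n :=
    Real.log_mul two_ne_zero hn0.ne'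
  have hinv : Real.log (1 + ((n:ℝ))⁻¹) = Real.log ((n:ℝ)+1) - Real.log n := by
    rw [← Real.log_div (by positivity) hn0.ne']
    congr 1
    field_simp
  rw [EE, hΓ, hst, hlogdiv, hlog2n, hinv]
  ring

lemma tendsto_EE_int : Tendsto (fun n : ℕ => EE ((n:ℝ) + 1)) atTop (𝓝 cSt) := by
  have h1 : Tendsto (fun n : ℕ => Real.log (Stirling.stirlingSeq n)) atTop (𝓝 (Real.log (Real.sqrt π))) :=
    Stirling.tendsto_stirlingSeq_sqrt_pi.log (by positivity)
  have h2 : Tendsto (fun n : ℕ => ((n:ℝ) + 1/2) * Real.log (1 + 1/((n:ℝ) + 0))) atTop (𝓝 1) :=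
    (tendsto_mul_log 1 (1/2) 0).comp tendsto_natCast_atTop_atTop
  have h2' : Tendsto (fun n : ℕ => ((n:ℝ) + 1/2) * Real.log (1 + ((n:ℝ))⁻¹)) atTop (𝓝 1) := by
    apply h2.congr
    intro n
    simp [add_zero, one_div]
  have h3 := ((h1.add_const (1 + (1/2) * Real.log 2)).sub h2')
  have : Real.log (Real.sqrt π) + (1 + (1/2) * Real.log 2) - 1 = cSt := by rw [cSt]; ring
  rw [this] at h3
  apply h3.congr'
  filter_upwards [eventually_ge_atTop 1] with n hn
  rw [EE_eq_stirling n hn]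
  ring

lemma tendsto_EE_nat : Tendsto (fun n : ℕ => EE (n:ℝ)) atTop (𝓝 cSt) := by
  rw [← Filter.tendsto_add_atTop_iff_nat 1]
  apply tendsto_EE_int.congr
  intro n
  push_cast
  ring_nf




lemma logGamma_add_one {y : ℝ} (hy : 0 < y) :
    Real.log (Real.Gamma (y + 1)) = Real.log y + Real.log (Real.Gamma y) := by
  rw [Real.Gamma_add_one hy.ne', Real.log_mul hy.ne' (Real.Gamma_pos_of_pos hy).ne']

-- upper sandwich bound
lemma EE_upper {s : ℝ} (hs0 : 0 < s) (hs1 : s ≤ 1) {n : ℕ} (hn : 1 ≤ n) :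
    EE ((n:ℝ) + s) ≤ EE (n:ℝ) + s - ((n:ℝ) + (s - 1/2)) * Real.log (1 + s/((n:ℝ) + 0)) := by
  have hn0 : (0:ℝ) < (n:ℝ) := by exact_mod_cast hn
  have cx := Real.convexOn_log_Gamma.2 (Set.mem_Ioi.2 hn0)
    (Set.mem_Ioi.2 (by linarith : (0:ℝ) < (n:ℝ) + 1))
    (by linarith : (0:ℝ) ≤ 1 - s) hs0.le (by ring)
  simp only [smul_eq_mul, Function.comp_apply] at cx
  have harg : (1 - s) * (n:ℝ) + s * ((n:ℝ) + 1) = (n:ℝ) + s := by ring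
  rw [harg, logGamma_add_one hn0] at cx
  have hlog : Real.log (1 + s/((n:ℝ) + 0)) = Real.log ((n:ℝ) + s) - Real.log n := by
    rw [← Real.log_div (by positivity) hn0.ne']
    congr 1
    field_simp
    ring
  rw [EE, EE, hlog]
  nlinarith [cx]

-- lower sandwich bound
lemma EE_lower {s : ℝ} (hs0 : 0 < s) (hs1 : s ≤ 1) {n : ℕ} (hn : 1 ≤ n) :
    EE ((n:ℝ) + 1) + ((n:ℝ) + 1/2) * Real.log (1 + (1-s)/((n:ℝ) + s)) - (1 - s)
      ≤ EE ((n:ℝ) + s) := by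
  have hn0 : (0:ℝ) < (n:ℝ) := by exact_mod_cast hn
  have hns : (0:ℝ) < (n:ℝ) + s := by linarith
  have cx := Real.convexOn_log_Gamma.2 (Set.mem_Ioi.2 hns)
    (Set.mem_Ioi.2 (by linarith : (0:ℝ) < ((n:ℝ) + s) + 1))
    hs0.le (by linarith : (0:ℝ) ≤ 1 - s) (by ring)
  simp only [smul_eq_mul, Function.comp_apply] at cx
  have harg : s * ((n:ℝ) + s) + (1 - s) * (((n:ℝ) + s) + 1) = (n:ℝ) + 1 := by ring
  rw [harg, logGamma_add_one hns] at cx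
  have hlog : Real.log (1 + (1-s)/((n:ℝ) + s)) = Real.log ((n:ℝ) + 1) - Real.log ((n:ℝ) + s) := by
    rw [← Real.log_div (by positivity) hns.ne']
    congr 1
    field_simp
    ring
  rw [EE, EE, hlog]
  nlinarith [cx]

lemma tendsto_EE_frac {s : ℝ} (hs0 : 0 < s) (hs1 : s ≤ 1) :
    Tendsto (fun n : ℕ => EE ((n:ℝ) + s)) atTop (𝓝 cSt) := by
  have hU : Tendsto (fun n : ℕ => EE (n:ℝ) + s
      - ((n:ℝ) + (s - 1/2)) * Real.log (1 + s/((n:ℝ) + 0))) atTop (𝓝 cSt) := by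
    have h := (tendsto_mul_log s (s - 1/2) 0).comp tendsto_natCast_atTop_atTop
    have := (tendsto_EE_nat.add_const s).sub h
    simpa using this
  have hV : Tendsto (fun n : ℕ => EE ((n:ℝ) + 1)
      + ((n:ℝ) + 1/2) * Real.log (1 + (1-s)/((n:ℝ) + s)) - (1 - s)) atTop (𝓝 cSt) := by
    have h := (tendsto_mul_log (1-s) (1/2) s).comp tendsto_natCast_atTop_atTop
    have := (tendsto_EE_int.add h).sub_const (1 - s)
    simpa using this
  refine tendsto_of_tendsto_of_tendsto_of_le_of_le' hV hU ?_ ?_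
  · filter_upwards [eventually_ge_atTop 1] with n hn
    exact EE_lower hs0 hs1 hn
  · filter_upwards [eventually_ge_atTop 1] with n hn
    exact EE_upper hs0 hs1 hn

lemma tendsto_EE_shift {a : ℝ} (ha : 0 < a) :
    Tendsto (fun n : ℕ => EE (a + (n:ℝ))) atTop (𝓝 cSt) := by
  set k : ℕ := ⌈a⌉₊ - 1 with hk
  have hceil : 1 ≤ ⌈a⌉₊ := Nat.one_le_ceil_iff.2 ha
  have hkc : ((k:ℝ)) = (⌈a⌉₊ : ℝ) - 1 := by
    rw [hk]
    push_cast [Nat.cast_sub hceil]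
    ring
  set s : ℝ := a - (k:ℝ) with hs
  have hs0 : 0 < s := by
    rw [hs, hkc]
    have := Nat.ceil_lt_add_one ha.le
    linarith
  have hs1 : s ≤ 1 := by
    rw [hs, hkc]
    have := Nat.le_ceil a
    linarith
  have h := (tendsto_EE_frac hs0 hs1).comp (tendsto_add_atTop_nat k)
  apply h.congr
  intro n
  simp only [Function.comp_apply]
  congr 1
  push_cast
  rw [hs]
  ring



lemma EE_iterate {a : ℝ} (ha : 0 < a) (n : ℕ) :
    EE (a + (n:ℝ)) ≤ EE a ∧ EE a ≤ EE (a + (n:ℝ)) + (1/(12*a) - 1/(12*(a + (n:ℝ)))) := by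
  induction n with
  | zero => simp
  | succ n ih =>
    have han : 0 < a + (n:ℝ) := by positivity
    have hstep := EE_step han
    have hcast : a + ((n:ℕ)+1 : ℕ) = (a + (n:ℝ)) + 1 := by push_cast; ring
    rw [hcast]
    have h12 : 0 < 12 * a := by linarith
    have h12n : (0:ℝ) < 12*(a + n) := by linarith
    have h12n1 : (0:ℝ) < 12*(a + n + 1) := by linarith
    constructor
    · linarith [ih.1, hstep.1]
    · linarith [ih.2, hstep.2]

lemma EE_bounds {a : ℝ} (ha : 0 < a) : cSt ≤ EE a ∧ EE a ≤ cSt + 1/(12*a) := by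
  constructor
  · exact le_of_tendsto (tendsto_EE_shift ha)
      (Eventually.of_forall fun n => (EE_iterate ha n).1)
  · refine ge_of_tendsto ((tendsto_EE_shift ha).add_const (1/(12*a)))
      (Eventually.of_forall fun n => ?_)
    have hn : (0:ℝ) ≤ (n:ℝ) := Nat.cast_nonneg n
    have h12n : (0:ℝ) < 12*(a + n) := by linarith
    linarith [(EE_iterate ha n).2, one_div_nonneg.2 h12n.le]

theorem stmt_18 (m : ℕ) (hm : 0 < m) (g : ℝ → ℝ)
    (hg : ∀ x : ℝ, 0 < x →
      g x = ((m : ℝ) * x) ^ ((m : ℝ) * x - 1 / 2) /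
        (Real.Gamma ((m : ℝ) * x) * Real.exp ((m : ℝ) * x)))
    (ξs ξ : ℝ) (hξs : 0 < ξs) (hξ : 0 < ξ) :
    min 1 (g ξs / g ξ) ≥ Real.exp (-1 / (12 * (m : ℝ) * ξs)) ∧
      Real.exp (-1 / (12 * (m : ℝ) * ξs)) ≥ 1 - 1 / (12 * (m : ℝ) * ξs) := by
  have hm0 : (0:ℝ) < (m:ℝ) := by exact_mod_cast hm
  have hgE : ∀ x : ℝ, 0 < x → g x = Real.exp (-(EE ((m:ℝ) * x))) := by
    intro x hx
    have hy : 0 < (m:ℝ) * x := by positivity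
    have hΓ : 0 < Real.Gamma ((m:ℝ)*x) := Real.Gamma_pos_of_pos hy
    rw [hg x hx, Real.rpow_def_of_pos hy, ← Real.exp_log hΓ, ← Real.exp_add, ← Real.exp_sub, EE]
    congr 1
    ring
  have hpos : (0:ℝ) < 12 * (m:ℝ) * ξs := by positivity
  have key : -1 / (12 * (m:ℝ) * ξs) ≤ EE ((m:ℝ) * ξ) - EE ((m:ℝ) * ξs) := by
    have h1 := (EE_bounds (show (0:ℝ) < (m:ℝ)*ξs by positivity)).2
    have h2 := (EE_bounds (show (0:ℝ) < (m:ℝ)*ξ by positivity)).1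
    have he : 1/(12*((m:ℝ)*ξs)) = 1/(12*(m:ℝ)*ξs) := by ring_nf
    rw [he] at h1
    have : -1 / (12 * (m:ℝ) * ξs) = -(1/(12 * (m:ℝ) * ξs)) := by ring
    rw [this]
    linarith
  refine ⟨le_min ?_ ?_, ?_⟩
  · rw [Real.exp_le_one_iff]
    have := one_div_pos.2 hpos
    rw [neg_div]
    linarith
  · rw [hgE ξs hξs, hgE ξ hξ, ← Real.exp_sub]
    apply Real.exp_le_exp.2
    linarith
  · have := Real.add_one_le_exp (-1 / (12 * (m:ℝ) * ξs))
    have hd : -1 / (12 * (m:ℝ) * ξs) = -(1 / (12 * (m:ℝ) * ξs)) := by ring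
    rw [hd] at this ⊢
    linarith
end

section
/- For every real s ≥ 0, ∫_0^∞ (1/√(2π)) · η^{1/2 - 1} · e^{-η/2} · e^{-s²/(2η)} dη = e^{-s}. -/
open Real MeasureTheory

section Aux
open Set

private lemma img_sq : (fun u : ℝ => u ^ 2) '' Ioi 0 = Ioi 0 := by
  ext t
  constructor
  · rintro ⟨u, hu, rfl⟩; exact pow_pos (show (0:ℝ) < u from hu) 2
  · intro ht; exact ⟨Real.sqrt t, Real.sqrt_pos.2 ht, Real.sq_sqrt ht.le⟩

private lemma img_div {s : ℝ} (hs : 0 < s) : (fun u : ℝ => s / u) '' Ioi 0 = Ioi 0 := by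
  ext t
  constructor
  · rintro ⟨u, hu, rfl⟩; exact div_pos hs hu
  · intro ht; exact ⟨s / t, div_pos hs ht, by field_simp⟩

private lemma img_g {s : ℝ} (hs : 0 < s) : (fun u : ℝ => u - s / u) '' Ioi 0 = univ := by
  ext t
  simp only [mem_univ, iff_true]
  set r := Real.sqrt (t ^ 2 + 4 * s) with hr
  have hr2 : r ^ 2 = t ^ 2 + 4 * s := Real.sq_sqrt (by nlinarith)
  have hr0 : 0 ≤ r := Real.sqrt_nonneg _
  have hu : 0 < (t + r) / 2 := by nlinarith
  refine ⟨(t + r) / 2, hu, ?_⟩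
  have hne : (t + r) / 2 ≠ 0 := ne_of_gt hu
  have key : s / ((t + r) / 2) = (t + r) / 2 - t := by
    rw [div_eq_iff hne]; nlinarith
  show (t + r) / 2 - s / ((t + r) / 2) = t
  rw [key]; ring

private lemma phi_cont {s : ℝ} :
    ContinuousOn (fun u : ℝ => Real.exp (-(u - s / u) ^ 2 / 2)) (Ioi 0) := by
  apply ContinuousOn.rexp
  apply ContinuousOn.div_const
  apply ContinuousOn.neg
  apply ContinuousOn.pow
  exact continuousOn_id.sub (continuousOn_const.div continuousOn_id fun x hx => ne_of_gt hx)

private lemma phi_int {s : ℝ} (hs : 0 ≤ s) :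
    IntegrableOn (fun u : ℝ => Real.exp (-(u - s / u) ^ 2 / 2)) (Ioi 0) := by
  have hg : Integrable (fun u : ℝ => Real.exp s * Real.exp (-(1/2) * u ^ 2)) :=
    (integrable_exp_neg_mul_sq (by norm_num : (0:ℝ) < 1/2)).const_mul _
  refine Integrable.mono' hg.integrableOn
    (phi_cont.aestronglyMeasurable measurableSet_Ioi) ?_
  filter_upwards [ae_restrict_mem measurableSet_Ioi] with u hu
  rw [Real.norm_eq_abs, abs_of_pos (Real.exp_pos _), ← Real.exp_add]
  apply Real.exp_le_exp.2
  have hu0 : (0:ℝ) < u := hu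
  have hid : (u - s / u) ^ 2 = u ^ 2 - 2 * s + (s / u) ^ 2 := by
    field_simp; ring
  have := sq_nonneg (s / u)
  nlinarith

private lemma aux_A {s : ℝ} (hs : 0 ≤ s) :
    ∫ u in Ioi (0:ℝ), Real.exp (-(u - s / u) ^ 2 / 2) = Real.sqrt (2 * π) / 2 := by
  rcases hs.eq_or_lt with rfl | hs
  · have : ∀ u ∈ Ioi (0:ℝ), Real.exp (-(u - (0:ℝ) / u) ^ 2 / 2)
        = Real.exp (-(1/2) * u ^ 2) := by
      intro u hu; rw [zero_div, sub_zero]; ring_nf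
    rw [setIntegral_congr_fun measurableSet_Ioi this, integral_gaussian_Ioi]
    norm_num [mul_comm]
  -- s > 0 case
  set φ : ℝ → ℝ := fun u => Real.exp (-(u - s / u) ^ 2 / 2) with hφ
  -- derivative facts
  have hderiv : ∀ u ∈ Ioi (0:ℝ), HasDerivWithinAt (fun u : ℝ => u - s / u)
      (1 + s / u ^ 2) (Ioi 0) u := by
    intro u hu
    have hu0 : (0:ℝ) < u := hu
    have h2 : HasDerivAt (fun u : ℝ => s / u) (-(s / u ^ 2)) u := by
      simpa [div_eq_mul_inv, mul_comm, neg_mul, mul_neg] using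
        (hasDerivAt_inv hu0.ne').const_mul s
    exact (((hasDerivAt_id' u).sub h2).congr_deriv (by ring)).hasDerivWithinAt
  have hinj : InjOn (fun u : ℝ => u - s / u) (Ioi 0) := by
    apply StrictMonoOn.injOn
    intro u hu v hv huv
    have hu0 : (0:ℝ) < u := hu
    have hv0 : (0:ℝ) < v := hv
    have : s / v ≤ s / u := div_le_div_of_nonneg_left hs.le hu0 huv.le
    simp only
    linarith
  -- second substitution: v = s/u
  have hderiv2 : ∀ u ∈ Ioi (0:ℝ), HasDerivWithinAt (fun u : ℝ => s / u)
      (-(s / u ^ 2)) (Ioi 0) u := by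
    intro u hu
    have hu0 : (0:ℝ) < u := hu
    exact (by simpa [div_eq_mul_inv, mul_comm, neg_mul, mul_neg] using
      (hasDerivAt_inv hu0.ne').const_mul s : HasDerivAt (fun u : ℝ => s / u)
        (-(s / u ^ 2)) u).hasDerivWithinAt
  have hinj2 : InjOn (fun u : ℝ => s / u) (Ioi 0) := by
    intro u hu v hv h
    have hu0 : (0:ℝ) < u := hu
    have hv0 : (0:ℝ) < v := hv
    field_simp at h
    linarith
  have hphicomp : ∀ u ∈ Ioi (0:ℝ), |(-(s / u ^ 2))| • φ (s / u) = (s / u ^ 2) * φ u := by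
    intro u hu
    have hu0 : (0:ℝ) < u := hu
    have h1 : |(-(s / u ^ 2))| = s / u ^ 2 := by
      rw [abs_neg, abs_of_pos (div_pos hs (pow_pos hu0 2))]
    have h2 : φ (s / u) = φ u := by
      simp only [hφ]
      congr 1
      have : s / u - s / (s / u) = -(u - s / u) := by
        rw [div_div_eq_mul_div, mul_comm, mul_div_assoc, div_self hs.ne', mul_one]
        ring
      rw [this, neg_sq]
    rw [h1, h2, smul_eq_mul]
  -- B = A
  have hBA : ∫ u in Ioi (0:ℝ), (s / u ^ 2) * φ u = ∫ u in Ioi (0:ℝ), φ u := by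
    have := integral_image_eq_integral_abs_deriv_smul measurableSet_Ioi hderiv2 hinj2 φ
    rw [img_div hs] at this
    rw [this]
    exact setIntegral_congr_fun measurableSet_Ioi fun u hu => (hphicomp u hu).symm
  -- integrability of B-integrand
  have hB_int : IntegrableOn (fun u : ℝ => (s / u ^ 2) * φ u) (Ioi 0) := by
    have := (integrableOn_image_iff_integrableOn_abs_deriv_smul measurableSet_Ioi
      hderiv2 hinj2 φ).1 (by rw [img_div hs]; exact phi_int hs.le)
    exact this.congr_fun hphicomp measurableSet_Ioi
  -- total Gaussian
  have htot : ∫ t : ℝ, Real.exp (-(1/2) * t ^ 2) = Real.sqrt (2 * π) := by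
    rw [integral_gaussian]
    norm_num [mul_comm]
  have himg : Real.sqrt (2 * π) = ∫ u in Ioi (0:ℝ), |1 + s / u ^ 2| * φ u := by
    rw [← htot, ← setIntegral_univ, ← img_g hs]
    exact integral_image_eq_integral_abs_deriv_smul measurableSet_Ioi hderiv hinj
      (fun t => Real.exp (-(1/2) * t ^ 2)) |>.trans (by
        apply setIntegral_congr_fun measurableSet_Ioi
        intro u hu
        simp only [hφ, smul_eq_mul]
        congr 1
        ring)
  have hsplit : ∫ u in Ioi (0:ℝ), |1 + s / u ^ 2| * φ u
      = (∫ u in Ioi (0:ℝ), φ u) + ∫ u in Ioi (0:ℝ), (s / u ^ 2) * φ u := by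
    rw [← integral_add (phi_int hs.le) hB_int]
    apply setIntegral_congr_fun measurableSet_Ioi
    intro u hu
    have hu0 : (0:ℝ) < u := hu
    have h1 : |1 + s / u ^ 2| = 1 + s / u ^ 2 := by
      rw [abs_of_pos]; positivity
    dsimp only
    rw [h1]; ring
  rw [hBA] at hsplit
  have := himg.trans hsplit
  linarith

end Aux

open Set in
theorem stmt_19 (s : ℝ) (hs : 0 ≤ s) :
    ∫ η in Set.Ioi (0 : ℝ),
        (1 / Real.sqrt (2 * π)) * η ^ ((1 : ℝ) / 2 - 1) * Real.exp (-η / 2) *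
          Real.exp (-s ^ 2 / (2 * η)) = Real.exp (-s) := by
  have hsq : Real.sqrt (2 * π) ≠ 0 := ne_of_gt (Real.sqrt_pos.2 (by positivity))
  have h1 : ∀ η : ℝ, (1 / Real.sqrt (2 * π)) * η ^ ((1 : ℝ) / 2 - 1) * Real.exp (-η / 2) *
          Real.exp (-s ^ 2 / (2 * η))
      = (1 / Real.sqrt (2 * π)) * (η ^ ((1 : ℝ) / 2 - 1) * Real.exp (-η / 2) *
          Real.exp (-s ^ 2 / (2 * η))) := fun η => by ring
  simp_rw [h1]
  rw [integral_const_mul]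
  -- substitution η = u ^ 2
  have hd : ∀ u ∈ Ioi (0:ℝ), HasDerivWithinAt (fun u : ℝ => u ^ 2) (2 * u) (Ioi 0) u :=
    fun u _ => (show HasDerivAt (fun u : ℝ => u ^ 2) (2 * u) u by
      simpa [mul_comm] using hasDerivAt_pow 2 u).hasDerivWithinAt
  have hinjsq : InjOn (fun u : ℝ => u ^ 2) (Ioi 0) := by
    apply StrictMonoOn.injOn
    intro u hu v hv huv
    have hu0 : (0:ℝ) < u := hu
    simp only
    nlinarith
  have hsub := integral_image_eq_integral_abs_deriv_smul measurableSet_Ioi hd hinjsq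
    (fun η => η ^ ((1 : ℝ) / 2 - 1) * Real.exp (-η / 2) * Real.exp (-s ^ 2 / (2 * η)))
  rw [img_sq] at hsub
  rw [hsub]
  have hpt : ∀ u ∈ Ioi (0:ℝ),
      |2 * u| • ((u ^ 2) ^ ((1 : ℝ) / 2 - 1) * Real.exp (-(u ^ 2) / 2) *
          Real.exp (-s ^ 2 / (2 * u ^ 2)))
      = (2 * Real.exp (-s)) * Real.exp (-(u - s / u) ^ 2 / 2) := by
    intro u hu
    have hu0 : (0:ℝ) < u := hu
    have hrpow : (u ^ 2 : ℝ) ^ ((1 : ℝ) / 2 - 1) = u⁻¹ := by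
      rw [← Real.rpow_natCast u 2, ← Real.rpow_mul hu0.le]
      norm_num [Real.rpow_neg_one]
    have hexp : -(u ^ 2) / 2 + -s ^ 2 / (2 * u ^ 2) = -s + -(u - s / u) ^ 2 / 2 := by
      field_simp
      ring
    have hkey : Real.exp (-(u ^ 2) / 2) * Real.exp (-s ^ 2 / (2 * u ^ 2))
        = Real.exp (-s) * Real.exp (-(u - s / u) ^ 2 / 2) := by
      rw [← Real.exp_add, hexp, Real.exp_add]
    have huu : u * u⁻¹ = 1 := mul_inv_cancel₀ hu0.ne'
    rw [smul_eq_mul, hrpow, abs_of_pos (by positivity : (0:ℝ) < 2 * u)]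
    calc 2 * u * (u⁻¹ * Real.exp (-(u ^ 2) / 2) * Real.exp (-s ^ 2 / (2 * u ^ 2)))
        = (u * u⁻¹) * (2 * (Real.exp (-(u ^ 2) / 2) * Real.exp (-s ^ 2 / (2 * u ^ 2)))) := by
          ring
      _ = 2 * (Real.exp (-(u ^ 2) / 2) * Real.exp (-s ^ 2 / (2 * u ^ 2))) := by
          rw [huu, one_mul]
      _ = 2 * (Real.exp (-s) * Real.exp (-(u - s / u) ^ 2 / 2)) := by rw [hkey]
      _ = (2 * Real.exp (-s)) * Real.exp (-(u - s / u) ^ 2 / 2) := by ring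
  rw [setIntegral_congr_fun measurableSet_Ioi hpt, integral_const_mul, aux_A hs]
  field_simp
end
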